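/- Let d_s : ℝ≥0 → ℝ be differentiable with ḋ_s(t) = h(t), where h is continuous, bounded, and h(t) → 0. Suppose the observer (equation 41) with gains k_{o1}, k_{o2} satisfying k_{o1} > 0 and w_{s0} k_{o2} > 0 is run against the plant ṡ = f_s(s)s + g_s(s)u_s + w_{s0} d_s. Then the estimation errors e_s = s - ŝ and e_d = d_s - d̂_s both converge to 0 as t → ∞. -/

import Mathlib

open Filter

private lemma uIcc_Ici {p q : ℝ} (hp : 0 ≤ p) (hq : 0 ≤ q) : Set.uIcc p q ⊆ Set.Ici 0 := by
  rw [Set.uIcc_eq_union]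
  exact Set.union_subset (Set.Icc_subset_Ici_self.trans (Set.Ici_subset_Ici.mpr hp))
    (Set.Icc_subset_Ici_self.trans (Set.Ici_subset_Ici.mpr hq))

private lemma exp_int (a : ℝ) (ha : a ≠ 0) (T t : ℝ) :
    ∫ τ in T..t, Real.exp (a*τ) = (Real.exp (a*t) - Real.exp (a*T))/a := by
  have h : ∀ τ ∈ Set.uIcc T t, HasDerivAt (fun σ => Real.exp (a*σ)/a) (Real.exp (a*τ)) τ := by
    intro τ _
    have := (((hasDerivAt_id τ).const_mul a).exp).div_const a
    refine this.congr_deriv (Eq.symm ?_)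
    field_simp
    rfl
  have hint : IntervalIntegrable (fun τ => Real.exp (a*τ)) MeasureTheory.volume T t :=
    (Real.continuous_exp.comp (continuous_const.mul continuous_id)).intervalIntegrable T t
  have := intervalIntegral.integral_eq_sub_of_hasDerivAt h hint
  rw [this]; ring

private lemma cexp_deriv (lam : ℂ) (t : ℝ) :
    HasDerivAt (fun τ : ℝ => Complex.exp (-(lam*τ))) (-lam * Complex.exp (-(lam*t))) t := by
  have h1 : HasDerivAt (fun τ : ℝ => -(lam * (τ:ℂ))) (-lam) t := by
    exact (((hasDerivAt_id t).ofReal_comp.const_mul lam).neg).congr_deriv (by simp)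
  simpa [mul_comm] using h1.cexp

private lemma decay (lam : ℂ) (hlam : lam.re < 0) (g x : ℝ → ℂ)
    (hg : ContinuousOn g (Set.Ici 0)) (C : ℝ) (hgb : ∀ t, 0 ≤ t → ‖g t‖ ≤ C)
    (hgv : Tendsto g atTop (nhds 0))
    (hx : ∀ t, 0 ≤ t → HasDerivAt x (lam * x t + g t) t) :
    Tendsto x atTop (nhds 0) ∧ ∃ B, ∀ t, 0 ≤ t → ‖x t‖ ≤ B := by
  set a : ℝ := -lam.re with ha_def
  have ha : 0 < a := by simpa [ha_def] using hlam
  have hcont : ContinuousOn (fun τ => Real.exp (a*τ) * ‖g τ‖) (Set.Ici 0) :=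
    (Real.continuous_exp.comp (continuous_const.mul continuous_id)).continuousOn.mul hg.norm
  have hint : ∀ p q : ℝ, 0 ≤ p → 0 ≤ q →
      IntervalIntegrable (fun τ => Real.exp (a*τ) * ‖g τ‖) MeasureTheory.volume p q :=
    fun p q hp hq => (hcont.mono (uIcc_Ici hp hq)).intervalIntegrable
  -- representation formula
  have hrepr : ∀ t, 0 ≤ t →
      x t = Complex.exp (lam*t) * (x 0 + ∫ τ in (0:ℝ)..t, Complex.exp (-(lam*τ)) * g τ) := by
    intro t ht
    have hy : ∀ τ ∈ Set.uIcc (0:ℝ) t, HasDerivAt (fun σ : ℝ => Complex.exp (-(lam*σ)) * x σ)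
        (Complex.exp (-(lam*τ)) * g τ) τ := by
      intro τ hτ
      have hτ0 : (0:ℝ) ≤ τ := uIcc_Ici le_rfl ht hτ
      have h1 := (cexp_deriv lam τ).mul (hx τ hτ0)
      refine h1.congr_deriv (Eq.symm ?_)
      ring
    have hi : IntervalIntegrable (fun τ : ℝ => Complex.exp (-(lam*τ)) * g τ)
        MeasureTheory.volume 0 t := by
      apply ContinuousOn.intervalIntegrable
      apply ContinuousOn.mul _ (hg.mono (uIcc_Ici le_rfl ht))
      exact (Complex.continuous_exp.comp (by continuity)).continuousOn
    have hsub := intervalIntegral.integral_eq_sub_of_hasDerivAt hy hi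
    rw [hsub]
    have hc : Complex.exp (lam*t) * Complex.exp (-(lam*t)) = 1 := by
      rw [← Complex.exp_add]; simp
    simp only [Complex.ofReal_zero, mul_zero, neg_zero, Complex.exp_zero, one_mul]
    calc x t = (Complex.exp (lam*t) * Complex.exp (-(lam*t))) * x t := by rw [hc, one_mul]
    _ = Complex.exp (lam*t) * (x 0 + (Complex.exp (-(lam*t)) * x t - x 0)) := by ring
  -- norm bound
  have hnorm : ∀ t, 0 ≤ t → ‖x t‖ ≤
      Real.exp (-(a*t)) * (‖x 0‖ + ∫ τ in (0:ℝ)..t, Real.exp (a*τ) * ‖g τ‖) := by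
    intro t ht
    rw [hrepr t ht]
    rw [norm_mul, Complex.norm_exp]
    have hre : (lam * (t:ℂ)).re = -(a*t) := by
      simp [Complex.mul_re, ha_def]
    rw [hre]
    gcongr
    calc ‖x 0 + ∫ τ in (0:ℝ)..t, Complex.exp (-(lam*τ)) * g τ‖
        ≤ ‖x 0‖ + ‖∫ τ in (0:ℝ)..t, Complex.exp (-(lam*τ)) * g τ‖ := norm_add_le _ _
      _ ≤ ‖x 0‖ + ∫ τ in (0:ℝ)..t, Real.exp (a*τ) * ‖g τ‖ := by
          gcongr
          calc ‖∫ τ in (0:ℝ)..t, Complex.exp (-(lam*τ)) * g τ‖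
              ≤ ∫ τ in (0:ℝ)..t, ‖Complex.exp (-(lam*τ)) * g τ‖ :=
                intervalIntegral.norm_integral_le_integral_norm ht
            _ = ∫ τ in (0:ℝ)..t, Real.exp (a*τ) * ‖g τ‖ := by
                apply intervalIntegral.integral_congr
                intro τ _
                show ‖Complex.exp (-(lam * (τ:ℂ))) * g τ‖ = Real.exp (a*τ) * ‖g τ‖
                rw [norm_mul, Complex.norm_exp]
                congr 2
                simp [Complex.mul_re, ha_def]
  -- boundedness
  have hC' : (0:ℝ) ≤ max C 0 := le_max_right _ _
  have hbound : ∀ t, 0 ≤ t → ‖x t‖ ≤ ‖x 0‖ + (max C 0)/a := by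
    intro t ht
    have h1 : (∫ τ in (0:ℝ)..t, Real.exp (a*τ) * ‖g τ‖) ≤
        ∫ τ in (0:ℝ)..t, Real.exp (a*τ) * (max C 0) := by
      apply intervalIntegral.integral_mono_on ht (hint 0 t le_rfl ht)
      · exact ((Real.continuous_exp.comp (continuous_const.mul continuous_id)).mul
          continuous_const).intervalIntegrable _ _
      · intro τ hτ
        exact mul_le_mul_of_nonneg_left ((hgb τ hτ.1).trans (le_max_left _ _))
          (Real.exp_pos _).le
    have h2 : (∫ τ in (0:ℝ)..t, Real.exp (a*τ) * (max C 0)) =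
        (max C 0) * ((Real.exp (a*t) - Real.exp (a*0))/a) := by
      rw [intervalIntegral.integral_mul_const, exp_int a (ne_of_gt ha)]
      ring
    have hE1 : 1 ≤ Real.exp (a*t) := Real.one_le_exp (by positivity)
    have hE0 : 0 < Real.exp (a*t) := Real.exp_pos _
    have hX : 0 ≤ ‖x 0‖ := norm_nonneg _
    calc ‖x t‖ ≤ Real.exp (-(a*t)) * (‖x 0‖ + ∫ τ in (0:ℝ)..t, Real.exp (a*τ) * ‖g τ‖) :=
          hnorm t ht
      _ ≤ Real.exp (-(a*t)) * (‖x 0‖ + (max C 0) * ((Real.exp (a*t) - 1)/a)) := by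
          rw [Real.exp_neg]
          have := h1.trans (le_of_eq h2)
          simp only [mul_zero, Real.exp_zero] at this
          gcongr
      _ ≤ ‖x 0‖ + (max C 0)/a := by
          rw [Real.exp_neg, inv_mul_le_iff₀ hE0]
          have hD : 0 ≤ (max C 0)/a := by positivity
          have : (max C 0) * ((Real.exp (a*t) - 1)/a) = ((max C 0)/a) * (Real.exp (a*t) - 1) := by
            ring
          rw [this]
          nlinarith [mul_nonneg (sub_nonneg.mpr hE1) hX, mul_nonneg (sub_nonneg.mpr hE1) hD]
  refine ⟨?_, ‖x 0‖ + (max C 0)/a, hbound⟩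
  -- convergence
  rw [NormedAddCommGroup.tendsto_nhds_zero]
  intro eps heps
  obtain ⟨T₀, hT₀⟩ := eventually_atTop.mp
    (NormedAddCommGroup.tendsto_nhds_zero.mp hgv (a*eps/4) (by positivity))
  set T : ℝ := max T₀ 0 with hT_def
  have hT0 : (0:ℝ) ≤ T := le_max_right _ _
  set M : ℝ := ∫ τ in (0:ℝ)..T, Real.exp (a*τ) * ‖g τ‖ with hM_def
  have key : ∀ t, T ≤ t → ‖x t‖ ≤ Real.exp (-(a*t)) * (‖x 0‖ + M) + eps/4 := by
    intro t htT
    have ht : 0 ≤ t := hT0.trans htT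
    have hsplit : (∫ τ in (0:ℝ)..t, Real.exp (a*τ) * ‖g τ‖) =
        M + ∫ τ in T..t, Real.exp (a*τ) * ‖g τ‖ :=
      (intervalIntegral.integral_add_adjacent_intervals (hint 0 T le_rfl hT0)
        (hint T t hT0 ht)).symm
    have htail : (∫ τ in T..t, Real.exp (a*τ) * ‖g τ‖) ≤ (eps/4) * Real.exp (a*t) := by
      have h1 : (∫ τ in T..t, Real.exp (a*τ) * ‖g τ‖) ≤
          ∫ τ in T..t, Real.exp (a*τ) * (a*eps/4) := by
        apply intervalIntegral.integral_mono_on htT (hint T t hT0 ht)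
        · exact ((Real.continuous_exp.comp (continuous_const.mul continuous_id)).mul
            continuous_const).intervalIntegrable _ _
        · intro τ hτ
          exact mul_le_mul_of_nonneg_left
            ((hT₀ τ ((le_max_left _ _).trans hτ.1)).le) (Real.exp_pos _).le
      have h2 : (∫ τ in T..t, Real.exp (a*τ) * (a*eps/4)) =
          (eps/4) * (Real.exp (a*t) - Real.exp (a*T)) := by
        rw [intervalIntegral.integral_mul_const, exp_int a (ne_of_gt ha)]
        field_simp
      refine h1.trans (h2.trans_le ?_)
      have := (Real.exp_pos (a*T)).le
      nlinarith
    have hEinv : Real.exp (-(a*t)) * Real.exp (a*t) = 1 := by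
      rw [Real.exp_neg]
      exact inv_mul_cancel₀ (ne_of_gt (Real.exp_pos _))
    calc ‖x t‖ ≤ Real.exp (-(a*t)) * (‖x 0‖ + ∫ τ in (0:ℝ)..t, Real.exp (a*τ) * ‖g τ‖) :=
          hnorm t ht
      _ ≤ Real.exp (-(a*t)) * (‖x 0‖ + (M + (eps/4) * Real.exp (a*t))) := by
          rw [hsplit]
          gcongr
      _ = Real.exp (-(a*t)) * (‖x 0‖ + M) + (eps/4) * (Real.exp (-(a*t)) * Real.exp (a*t)) := by
          ring
      _ = Real.exp (-(a*t)) * (‖x 0‖ + M) + eps/4 := by rw [hEinv, mul_one]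
  have hexp0 : Tendsto (fun t : ℝ => Real.exp (-(a*t)) * (‖x 0‖ + M)) atTop (nhds 0) := by
    have h2 : Tendsto (fun t : ℝ => a*t) atTop atTop :=
      Tendsto.const_mul_atTop ha tendsto_id
    have h3 : Tendsto (fun t : ℝ => Real.exp (-(a*t))) atTop (nhds 0) :=
      Real.tendsto_exp_atBot.comp (tendsto_neg_atTop_atBot.comp h2)
    simpa using h3.mul_const (‖x 0‖ + M)
  have hev := hexp0.eventually_lt_const (show (0:ℝ) < 3*eps/4 by positivity)
  filter_upwards [eventually_ge_atTop T, hev] with t htT hsmall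
  have := key t htT
  linarith


/-- Theorem 1 with the explicit Hurwitz condition: the extended disturbance
observer with gains `k₁ > 0`, `w k₂ > 0`, run against the plant
`ṡ = f_s(s)s + g_s(s)u_s + w d_s` with `ḋ_s = h(t)` continuous, bounded, and
vanishing, yields estimation errors `s - ŝ` and `d_s - d̂_s` converging to 0. -/
theorem extended_observer_convergence (k₁ k₂ w : ℝ)
    (hk₁ : 0 < k₁) (hk₂ : 0 < w * k₂)
    (fs gs us s shat ds dhat h : ℝ → ℝ)
    (hcont : Continuous h) (hbdd : ∃ C, ∀ t, 0 ≤ t → |h t| ≤ C)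
    (hvanish : Tendsto h atTop (nhds 0))
    (hds : ∀ t, 0 ≤ t → HasDerivAt ds (h t) t)
    (hplant : ∀ t, 0 ≤ t →
      HasDerivAt s (fs (s t) * s t + gs (s t) * us t + w * ds t) t)
    (hobs₁ : ∀ t, 0 ≤ t → HasDerivAt shat
      (fs (s t) * s t + gs (s t) * us t + w * dhat t + k₁ * (s t - shat t)) t)
    (hobs₂ : ∀ t, 0 ≤ t → HasDerivAt dhat (k₂ * (s t - shat t)) t) :
    Tendsto (fun t => s t - shat t) atTop (nhds 0) ∧
      Tendsto (fun t => ds t - dhat t) atTop (nhds 0) := by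
  obtain ⟨C, hC⟩ := hbdd
  have hw : w ≠ 0 := by rintro rfl; simp at hk₂
  set disc : ℝ := k₁^2 - 4*(w*k₂) with hdisc
  set z : ℂ := if 0 ≤ disc then ((Real.sqrt disc : ℝ) : ℂ) else Complex.I * ((Real.sqrt (-disc) : ℝ) : ℂ) with hz_def
  have hz2 : z^2 = (disc : ℂ) := by
    by_cases hd : 0 ≤ disc
    · simp only [hz_def, if_pos hd]
      norm_cast
      exact Real.sq_sqrt hd
    · simp only [hz_def, if_neg hd]
      have h1 : ((Real.sqrt (-disc) : ℝ) : ℂ)^2 = ((-disc : ℝ) : ℂ) := by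
        norm_cast
        exact Real.sq_sqrt (by linarith [lt_of_not_ge hd])
      rw [mul_pow, Complex.I_sq, h1]
      push_cast
      ring
  have hzre0 : 0 ≤ z.re := by
    by_cases hd : 0 ≤ disc
    · simp [hz_def, if_pos hd, Real.sqrt_nonneg]
    · simp [hz_def, if_neg hd]
  have hzrek : z.re < k₁ := by
    by_cases hd : 0 ≤ disc
    · simp only [hz_def, if_pos hd, Complex.ofReal_re]
      rw [Real.sqrt_lt' hk₁]
      simp only [hdisc]; nlinarith
    · simp only [hz_def, if_neg hd]
      simpa using hk₁
  set lam1 : ℂ := (-(k₁:ℂ) + z)/2 with hl1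
  set lam2 : ℂ := (-(k₁:ℂ) - z)/2 with hl2
  have hsum : lam1 + lam2 = -(k₁:ℂ) := by rw [hl1, hl2]; ring
  have hprod : lam1 * lam2 = (w:ℂ) * (k₂:ℂ) := by
    have h1 : lam1 * lam2 = ((k₁:ℂ)^2 - z^2)/4 := by rw [hl1, hl2]; ring
    rw [h1, hz2, hdisc]; push_cast; ring
  have hre1 : lam1.re < 0 := by
    rw [hl1, show (2:ℂ) = ((2:ℝ):ℂ) by norm_num, Complex.div_ofReal_re]
    simp only [Complex.add_re, Complex.neg_re, Complex.ofReal_re]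
    linarith
  have hre2 : lam2.re < 0 := by
    rw [hl2, show (2:ℂ) = ((2:ℝ):ℂ) by norm_num, Complex.div_ofReal_re]
    simp only [Complex.sub_re, Complex.neg_re, Complex.ofReal_re]
    linarith
  -- error system, complexified
  set E : ℝ → ℂ := fun t => ((s t - shat t : ℝ) : ℂ) with hE_def
  set D : ℝ → ℂ := fun t => ((ds t - dhat t : ℝ) : ℂ) with hD_def
  have hE' : ∀ t, 0 ≤ t → HasDerivAt E (-(k₁:ℂ) * E t + (w:ℂ) * D t) t := by
    intro t ht
    have h1 := ((hplant t ht).sub (hobs₁ t ht)).ofReal_comp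
    refine h1.congr_deriv (Eq.symm ?_)
    simp only [hE_def, hD_def]
    push_cast
    ring
  have hD' : ∀ t, 0 ≤ t → HasDerivAt D (-(k₂:ℂ) * E t + ((h t : ℝ) : ℂ)) t := by
    intro t ht
    have h1 := ((hds t ht).sub (hobs₂ t ht)).ofReal_comp
    refine h1.congr_deriv (Eq.symm ?_)
    simp only [hE_def, hD_def]
    push_cast
    ring
  set u : ℝ → ℂ := fun t => (-(k₁:ℂ) * E t + (w:ℂ) * D t) - lam2 * E t with hu_def
  have hu' : ∀ t, 0 ≤ t → HasDerivAt u (lam1 * u t + (w:ℂ) * ((h t : ℝ) : ℂ)) t := by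
    intro t ht
    have h1 := (((hE' t ht).const_mul (-(k₁:ℂ))).add ((hD' t ht).const_mul (w:ℂ))).sub
      ((hE' t ht).const_mul lam2)
    have hz2' : z^2 = (k₁:ℂ)^2 - 4*((w:ℂ)*(k₂:ℂ)) := by
      rw [hz2, hdisc]; push_cast; ring
    refine h1.congr_deriv (Eq.symm ?_)
    rw [hu_def]
    linear_combination (-(-(k₁:ℂ) * E t + (w:ℂ) * D t)) * hsum + (E t) * hprod
      + (E t)/2 * hz2' 
  -- first decay stage
  have hwh_cont : ContinuousOn (fun t => (w:ℂ) * ((h t : ℝ) : ℂ)) (Set.Ici 0) :=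
    (continuous_const.mul (Complex.continuous_ofReal.comp hcont)).continuousOn
  have hwh_bdd : ∀ t, 0 ≤ t → ‖(w:ℂ) * ((h t : ℝ) : ℂ)‖ ≤ |w| * C := by
    intro t ht
    rw [norm_mul, Complex.norm_real, Complex.norm_real]
    exact mul_le_mul_of_nonneg_left (hC t ht) (abs_nonneg _)
  have hwh_van : Tendsto (fun t => (w:ℂ) * ((h t : ℝ) : ℂ)) atTop (nhds 0) := by
    have h1 : Tendsto (fun t => ((h t : ℝ) : ℂ)) atTop (nhds 0) := by
      have := (Complex.continuous_ofReal.tendsto 0).comp hvanish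
      exact this
    simpa using h1.const_mul (w:ℂ)
  obtain ⟨huT, B, huB⟩ := decay lam1 hre1 _ u hwh_cont (|w| * C) hwh_bdd hwh_van hu'
  -- second decay stage
  have hucont : ContinuousOn u (Set.Ici 0) := fun t ht =>
    ((hu' t ht).continuousAt).continuousWithinAt
  have hE'2 : ∀ t, 0 ≤ t → HasDerivAt E (lam2 * E t + u t) t := by
    intro t ht
    refine (hE' t ht).congr_deriv (Eq.symm ?_)
    rw [hu_def]; ring
  obtain ⟨hET, -⟩ := decay lam2 hre2 u E hucont B huB huT hE'2
  constructor
  · have h1 := (Complex.continuous_re.tendsto (0:ℂ)).comp hET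
    simpa [hE_def, Function.comp_def] using h1
  · have hwD : Tendsto (fun t => (w:ℂ) * D t) atTop (nhds 0) := by
      have h1 : ∀ t, (w:ℂ) * D t = u t + (lam2 + (k₁:ℂ)) * E t := by
        intro t; rw [hu_def]; ring
      have h2 := huT.add (hET.const_mul (lam2 + (k₁:ℂ)))
      simp only [add_zero, mul_zero] at h2
      simpa only [← h1] using h2
    have hD0 : Tendsto D atTop (nhds 0) := by
      have h2 := hwD.const_mul ((w:ℂ)⁻¹)
      simp only [mul_zero] at h2
      have h3 : ∀ t, (w:ℂ)⁻¹ * ((w:ℂ) * D t) = D t := by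
        intro t
        rw [← mul_assoc, inv_mul_cancel₀ (by exact_mod_cast hw), one_mul]
      simpa only [h3] using h2
    have h1 := (Complex.continuous_re.tendsto (0:ℂ)).comp hD0
    simpa [hD_def, Function.comp_def] using h1
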